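/- (Example 4.2, verification of the forwarding conditions) Fix n ≥ 1, let A ∈ ℝ^{n×n} be the matrix with A_{i,j} = 1 if j = i−1 and 0 otherwise and b = (1,0,…,0)' ∈ ℝⁿ. Let D ⊂ ℝˡ be nonempty compact, f : D×ℝⁿ → ℝⁿ, g : D×ℝⁿ → ℝ locally Lipschitz, and suppose there are constants L₂ ≥ L₁ > 0 and ρ > 0 with max(|f(d,x)|, |g(d,x)|) ≤ L₁|x| for all d ∈ D, |x| ≤ ρ, and |f(d,x)| ≤ L₂|x| for all (d,x). Let P be symmetric positive definite, p ∈ ℝⁿ, q > 0 with P(A+bp') + (A'+pb')P negative definite and x'P(A+bp')x + x'Pf(d,x) ≤ −q|x|² for all (d,x); let a₂ ≥ a₁ > 0 with a₁²x'Px ≤ |x|² ≤ a₂²x'Px for all x; set c = −(A'+pb')^{−1}(0,…,0,1)' and assume L₁ < q·a₁·|c'b| / ((1+|c|)·a₂·|Pb|). Then for every ω, R > 0 with a₂R ≤ ρ and every K with (1+|c|)L₁a₂R/|c'b|² < K < q·a₁·R/(|Pb|·|c'b|), setting M = K|c'b|ω|Pb| / ((1+|c|)L₁), there exists δ > 0 such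 that: (i) x'P(Ax + f(d,x) + bu) < 0 for all d ∈ D, x'Px = R², |u − p'x| ≤ K|c'b|; (ii) |g(d,x) + c'f(d,x)| < K(c'b)² for all d ∈ D, x'Px ≤ R², |u − p'x| ≤ K|c'b|; (iii) z(Mg(d,x) + Mc'f(d,x) − K(c'b)ω b'Px) ≤ (MK(c'b)²ω − δ)z² − x'P((A + bp' + δI)x + f(d,x)) for all (x,z) with x'Px ≤ R², ω|z| ≤ 1 and d ∈ D. -/

import Mathlib

open Matrix MeasureTheory Set Filter

noncomputable section

/-- The `m × m` matrix with ones on the subdiagonal and zeros elsewhere. -/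
def matA (m : ℕ) : Matrix (Fin m) (Fin m) ℝ :=
  Matrix.of fun i j => if (i : ℕ) = (j : ℕ) + 1 then 1 else 0

/-- The vector `b = (1,0,…,0)'` as a plain function. -/
def vecbf (m : ℕ) : Fin m → ℝ := fun i => if (i : ℕ) = 0 then 1 else 0

/-- The vector `b = (1,0,…,0)'` in Euclidean space. -/
def vecb (m : ℕ) : EuclideanSpace ℝ (Fin m) := (WithLp.equiv 2 (Fin m → ℝ)).symm (vecbf m)

/-- View a Euclidean vector as a plain function. -/
def ef {m : ℕ} (x : EuclideanSpace ℝ (Fin m)) : Fin m → ℝ := x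

/-- Matrix-vector multiplication on Euclidean space. -/
def mulVecE {m : ℕ} (M : Matrix (Fin m) (Fin m) ℝ) (x : EuclideanSpace ℝ (Fin m)) :
    EuclideanSpace ℝ (Fin m) :=
  (WithLp.equiv 2 (Fin m → ℝ)).symm (M.mulVec (ef x))

/-- Euclidean inner product `x'y`. -/
def ip {m : ℕ} (x y : EuclideanSpace ℝ (Fin m)) : ℝ := ∑ i, x i * y i

/-- Quadratic form `x'Px`. -/
def qf {m : ℕ} (P : Matrix (Fin m) (Fin m) ℝ) (x : EuclideanSpace ℝ (Fin m)) : ℝ :=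
  ip x (mulVecE P x)

/-- The saturation function `sat(s) = s / max(1,|s|)`. -/
def sat (s : ℝ) : ℝ := s / max 1 |s|

/-- The vector `c = -(A' + pb')⁻¹ (0,…,0,1)'`. -/
def cvec (n : ℕ) (p : EuclideanSpace ℝ (Fin (n+1))) : EuclideanSpace ℝ (Fin (n+1)) :=
  (WithLp.equiv 2 (Fin (n+1) → ℝ)).symm
    (-((((matA (n+1))ᵀ + vecMulVec (ef p) (vecbf (n+1)))⁻¹).mulVec (Pi.single (Fin.last n) 1)))

/-- Condition (3.3): `x'P(Ax + f(d,x,u) + bu) < 0` whenever `d ∈ D`, `x'Px = R²` and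
`|u - p'x| ≤ K|c'b|`. -/
def Cond33 {l n : ℕ} (D : Set (EuclideanSpace ℝ (Fin l)))
    (f : EuclideanSpace ℝ (Fin l) → EuclideanSpace ℝ (Fin (n+1)) → ℝ → EuclideanSpace ℝ (Fin (n+1)))
    (P : Matrix (Fin (n+1)) (Fin (n+1)) ℝ) (p : EuclideanSpace ℝ (Fin (n+1))) (R K : ℝ) : Prop :=
  ∀ d ∈ D, ∀ x : EuclideanSpace ℝ (Fin (n+1)), ∀ u : ℝ,
    qf P x = R ^ 2 → |u - ip p x| ≤ K * |ip (cvec n p) (vecb (n+1))| →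
      ip x (mulVecE P (mulVecE (matA (n+1)) x + f d x u + u • vecb (n+1))) < 0

/-- Condition (3.4): `|g(d,x,u) + c'f(d,x,u)| < K(c'b)²` whenever `d ∈ D`, `x'Px ≤ R²` and
`|u - p'x| ≤ K|c'b|`. -/
def Cond34 {l n : ℕ} (D : Set (EuclideanSpace ℝ (Fin l)))
    (f : EuclideanSpace ℝ (Fin l) → EuclideanSpace ℝ (Fin (n+1)) → ℝ → EuclideanSpace ℝ (Fin (n+1)))
    (g : EuclideanSpace ℝ (Fin l) → EuclideanSpace ℝ (Fin (n+1)) → ℝ → ℝ)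
    (P : Matrix (Fin (n+1)) (Fin (n+1)) ℝ) (p : EuclideanSpace ℝ (Fin (n+1))) (R K : ℝ) : Prop :=
  ∀ d ∈ D, ∀ x : EuclideanSpace ℝ (Fin (n+1)), ∀ u : ℝ,
    qf P x ≤ R ^ 2 → |u - ip p x| ≤ K * |ip (cvec n p) (vecb (n+1))| →
      |g d x u + ip (cvec n p) (f d x u)| < K * (ip (cvec n p) (vecb (n+1))) ^ 2

/-- Condition (3.5). -/
def Cond35 {l n : ℕ} (D : Set (EuclideanSpace ℝ (Fin l)))
    (f : EuclideanSpace ℝ (Fin l) → EuclideanSpace ℝ (Fin (n+1)) → ℝ → EuclideanSpace ℝ (Fin (n+1)))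
    (g : EuclideanSpace ℝ (Fin l) → EuclideanSpace ℝ (Fin (n+1)) → ℝ → ℝ)
    (P : Matrix (Fin (n+1)) (Fin (n+1)) ℝ) (p : EuclideanSpace ℝ (Fin (n+1)))
    (M R K ω δ : ℝ) : Prop :=
  ∀ d ∈ D, ∀ x : EuclideanSpace ℝ (Fin (n+1)), ∀ z : ℝ,
    qf P x ≤ R ^ 2 → ω * |z| ≤ 1 →
      ∀ u : ℝ, u = ip p x - K * ip (cvec n p) (vecb (n+1)) * ω * z →
        z * (M * g d x u + M * ip (cvec n p) (f d x u)
              - K * ip (cvec n p) (vecb (n+1)) * ω * ip (vecb (n+1)) (mulVecE P x))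
          ≤ (M * K * (ip (cvec n p) (vecb (n+1))) ^ 2 * ω - δ) * z ^ 2
            - ip x (mulVecE P
                (mulVecE (matA (n+1) + vecMulVec (vecbf (n+1)) (ef p) + δ • 1) x + f d x u))


/-! ### Auxiliary lemmas -/

section Ex42Aux

variable {m : ℕ}

lemma ex42_ip_eq_inner (x y : EuclideanSpace ℝ (Fin m)) : ip x y = inner ℝ x y := by
  simp [ip, PiLp.inner_apply, RCLike.inner_apply, mul_comm]

lemma ex42_abs_ip_le (x y : EuclideanSpace ℝ (Fin m)) : |ip x y| ≤ ‖x‖ * ‖y‖ := by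
  rw [ex42_ip_eq_inner]; exact abs_real_inner_le_norm x y

lemma ex42_ip_add_right (x y z : EuclideanSpace ℝ (Fin m)) : ip x (y + z) = ip x y + ip x z := by
  simp [ip, mul_add, Finset.sum_add_distrib]

lemma ex42_ip_smul_right (a : ℝ) (x y : EuclideanSpace ℝ (Fin m)) :
    ip x (a • y) = a * ip x y := by
  simp [ip, Finset.mul_sum]
  exact Finset.sum_congr rfl fun i _ => by ring

lemma ex42_ip_zero_right (x : EuclideanSpace ℝ (Fin m)) :
    ip x (0 : EuclideanSpace ℝ (Fin m)) = 0 := by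
  simp only [ip]
  refine Finset.sum_eq_zero fun i _ => ?_
  show x i * (0:ℝ) = 0
  ring

lemma ex42_mulVecE_add (M : Matrix (Fin m) (Fin m) ℝ) (x y : EuclideanSpace ℝ (Fin m)) :
    mulVecE M (x + y) = mulVecE M x + mulVecE M y := by
  simp only [mulVecE]
  have : ef (x + y) = ef x + ef y := rfl
  rw [this, Matrix.mulVec_add]; rfl

lemma ex42_mulVecE_smul (M : Matrix (Fin m) (Fin m) ℝ) (a : ℝ) (x : EuclideanSpace ℝ (Fin m)) :
    mulVecE M (a • x) = a • mulVecE M x := by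
  simp only [mulVecE]
  have : ef (a • x) = a • ef x := rfl
  rw [this, Matrix.mulVec_smul]; rfl

lemma ex42_add_mulVecE (M N : Matrix (Fin m) (Fin m) ℝ) (x : EuclideanSpace ℝ (Fin m)) :
    mulVecE (M + N) x = mulVecE M x + mulVecE N x := by
  simp only [mulVecE, Matrix.add_mulVec]; rfl

lemma ex42_smul_one_mulVecE (a : ℝ) (x : EuclideanSpace ℝ (Fin m)) :
    mulVecE (a • (1 : Matrix (Fin m) (Fin m) ℝ)) x = a • x := by
  simp only [mulVecE, Matrix.smul_mulVec, Matrix.one_mulVec]; rfl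

lemma ex42_vecMulVec_mulVecE (u v : Fin m → ℝ) (x : EuclideanSpace ℝ (Fin m)) :
    mulVecE (vecMulVec u v) x
      = (ip ((WithLp.equiv 2 (Fin m → ℝ)).symm v) x) • (WithLp.equiv 2 (Fin m → ℝ)).symm u := by
  simp only [mulVecE]
  ext i
  simp [Matrix.mulVec, vecMulVec_apply, dotProduct, ip, ef]
  rw [Finset.sum_mul]
  exact Finset.sum_congr rfl fun j _ => by ring

lemma ex42_ip_mulVecE_symm {P : Matrix (Fin m) (Fin m) ℝ} (hP : P.IsHermitian)
    (x y : EuclideanSpace ℝ (Fin m)) : ip x (mulVecE P y) = ip y (mulVecE P x) := by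
  have hsym : ∀ i j, P i j = P j i := fun i j => by
    have := congrFun (congrFun hP.eq j) i
    simpa [Matrix.conjTranspose_apply] using this
  simp only [ip, mulVecE, Matrix.mulVec, dotProduct, ef, WithLp.equiv_symm_apply, PiLp.toLp_apply,
    Finset.mul_sum]
  rw [Finset.sum_comm]
  refine Finset.sum_congr rfl fun i _ => Finset.sum_congr rfl fun j _ => ?_
  rw [hsym j i]; ring

lemma ex42_abp {n : ℕ} (p x : EuclideanSpace ℝ (Fin (n+1))) :
    mulVecE (matA (n+1) + vecMulVec (vecbf (n+1)) (ef p)) x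
      = mulVecE (matA (n+1)) x + ip p x • vecb (n+1) := by
  rw [ex42_add_mulVecE, ex42_vecMulVec_mulVecE]; rfl

lemma ex42_nPb_pos {n : ℕ} (P : Matrix (Fin (n+1)) (Fin (n+1)) ℝ) (hP : P.PosDef) :
    0 < ‖mulVecE P (vecb (n+1))‖ := by
  have hb0 : vecbf (n+1) ≠ 0 := by
    intro h
    have := congrFun h ⟨0, Nat.succ_pos n⟩
    simp [vecbf] at this
  have hpos := hP.dotProduct_mulVec_pos hb0
  have heq : star (vecbf (n+1)) ⬝ᵥ (P *ᵥ vecbf (n+1))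
      = ip (vecb (n+1)) (mulVecE P (vecb (n+1))) := by
    simp only [ip, mulVecE, ef, vecb, dotProduct]
    rfl
  rw [heq] at hpos
  rw [norm_pos_iff]
  intro h
  rw [h, ex42_ip_zero_right] at hpos
  exact lt_irrefl 0 hpos

lemma ex42_quad35 (s β δ q a1 t u Q : ℝ) (hβ : 0 < β) (ha1 : 0 < a1) (hδ : 0 ≤ δ)
    (ht : 0 ≤ t) (hu : 0 ≤ u) (hs : 0 ≤ s)
    (hQ : a1^2*Q ≤ u^2) (hkey : s^2*a1^2 ≤ β*(q*a1^2 - δ)) :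
    2*s*t*u ≤ β*t^2 + q*u^2 - δ*Q := by
  nlinarith [sq_nonneg (β*a1*t - s*a1*u), mul_le_mul_of_nonneg_right hkey (sq_nonneg u),
    mul_le_mul_of_nonneg_left hQ (mul_nonneg hβ.le hδ),
    mul_pos hβ (mul_pos ha1 ha1), sq_nonneg u, sq_nonneg t, mul_nonneg ht hu]

lemma ex42_choose_delta (A0 s q a1 : ℝ) (hA0 : 0 < A0) (hq : 0 < q) (ha1 : 0 < a1)
    (hs : 0 ≤ s) (hE : s^2 < A0*q) :
    ∃ δ : ℝ, 0 < δ ∧ δ < A0 ∧ 0 ≤ q*a1^2 - δ ∧ s^2*a1^2 ≤ (A0-δ)*(q*a1^2-δ) := by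
  set E := A0*q - s^2 with hEdef
  have hE0 : 0 < E := by simp [hEdef]; linarith
  have ha12 : (0:ℝ) < a1^2 := by positivity
  refine ⟨min (min (A0/2) (E/(2*q))) (E*a1^2/(2*A0)), ?_, ?_, ?_, ?_⟩
  · positivity
  · calc min (min (A0/2) (E/(2*q))) (E*a1^2/(2*A0)) ≤ A0/2 :=
        le_trans (min_le_left _ _) (min_le_left _ _)
      _ < A0 := by linarith
  · have h1 : min (min (A0/2) (E/(2*q))) (E*a1^2/(2*A0)) ≤ E*a1^2/(2*A0) := min_le_right _ _
    have h2 : E ≤ A0*q := by nlinarith [sq_nonneg s]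
    have h3 : E*a1^2/(2*A0) ≤ q*a1^2/2 := by
      rw [div_le_iff₀ (by linarith)]
      nlinarith
    nlinarith
  · set δ := min (min (A0/2) (E/(2*q))) (E*a1^2/(2*A0)) with hδdef
    have hδ0 : 0 < δ := by positivity
    have h1 : δ ≤ A0/2 := le_trans (min_le_left _ _) (min_le_left _ _)
    have h2 : δ ≤ E/(2*q) := le_trans (min_le_left _ _) (min_le_right _ _)
    have h3 : δ ≤ E*a1^2/(2*A0) := min_le_right _ _
    have h2' : δ*(2*q) ≤ E := by
      rw [le_div_iff₀ (by linarith)] at h2; exact h2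
    have h3' : δ*(2*A0) ≤ E*a1^2 := by
      rw [le_div_iff₀ (by linarith)] at h3; exact h3
    nlinarith [sq_nonneg δ, mul_pos hδ0 hδ0]

lemma ex42_le_of_sq (a R t Q : ℝ) (ha : 0 ≤ a) (hR : 0 ≤ R) (ht : 0 ≤ t)
    (h1 : t^2 ≤ a^2*Q) (h2 : Q ≤ R^2) : t ≤ a*R := by
  nlinarith [sq_nonneg (a*R - t), sq_nonneg (a*R + t), mul_nonneg ha hR]

lemma ex42_ge_of_sq (a R t : ℝ) (ha : 0 ≤ a) (hR : 0 ≤ R) (ht : 0 ≤ t)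
    (h1 : a^2*R^2 ≤ t^2) : a*R ≤ t := by
  nlinarith [sq_nonneg (a*R - t), sq_nonneg (a*R + t), mul_nonneg ha hR]

end Ex42Aux

/-- **Example 4.2 (verification of the forwarding conditions).** For dynamics
`ẋ = Ax + bu + f(d,x)`, `ẏ = xₙ + g(d,x)` with `u`-independent nonlinearities satisfying
the stated linear bounds, Lyapunov condition (4.18) and the smallness condition (4.19),
for every `ω, R > 0` with `a₂R ≤ ρ` and every admissible `K`, with
`M = K|c'b|ω|Pb|/((1+|c|)L₁)`, there exists `δ > 0` such that conditions (3.3), (3.4),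
(3.5) hold. -/
theorem example_4_2_conditions (n l : ℕ)
    (D : Set (EuclideanSpace ℝ (Fin l))) (hD : D.Nonempty) (hDc : IsCompact D)
    (f : EuclideanSpace ℝ (Fin l) → EuclideanSpace ℝ (Fin (n+1)) → EuclideanSpace ℝ (Fin (n+1)))
    (g : EuclideanSpace ℝ (Fin l) → EuclideanSpace ℝ (Fin (n+1)) → ℝ)
    (hfLip : LocallyLipschitz
      (fun q : EuclideanSpace ℝ (Fin l) × EuclideanSpace ℝ (Fin (n+1)) => f q.1 q.2))
    (hgLip : LocallyLipschitz
      (fun q : EuclideanSpace ℝ (Fin l) × EuclideanSpace ℝ (Fin (n+1)) => g q.1 q.2))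
    (L1 L2 ρ : ℝ) (hL1 : 0 < L1) (hL12 : L1 ≤ L2) (hρ : 0 < ρ)
    (hloc : ∀ d ∈ D, ∀ x : EuclideanSpace ℝ (Fin (n+1)), ‖x‖ ≤ ρ →
      max ‖f d x‖ |g d x| ≤ L1 * ‖x‖)
    (hglob : ∀ d ∈ D, ∀ x : EuclideanSpace ℝ (Fin (n+1)), ‖f d x‖ ≤ L2 * ‖x‖)
    (P : Matrix (Fin (n+1)) (Fin (n+1)) ℝ) (hP : P.PosDef)
    (p : EuclideanSpace ℝ (Fin (n+1))) (q : ℝ) (hq : 0 < q)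
    (hneg : (-(P * (matA (n+1) + vecMulVec (vecbf (n+1)) (ef p))
        + ((matA (n+1))ᵀ + vecMulVec (ef p) (vecbf (n+1))) * P)).PosDef)
    (hLyap : ∀ d ∈ D, ∀ x : EuclideanSpace ℝ (Fin (n+1)),
      ip x (mulVecE P (mulVecE (matA (n+1) + vecMulVec (vecbf (n+1)) (ef p)) x))
          + ip x (mulVecE P (f d x)) ≤ -q * ‖x‖ ^ 2)
    (a1 a2 : ℝ) (ha1 : 0 < a1) (ha12 : a1 ≤ a2)
    (hnorm : ∀ x : EuclideanSpace ℝ (Fin (n+1)),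
      a1 ^ 2 * qf P x ≤ ‖x‖ ^ 2 ∧ ‖x‖ ^ 2 ≤ a2 ^ 2 * qf P x)
    (hsmall : L1 < q * a1 * |ip (cvec n p) (vecb (n+1))|
        / ((1 + ‖cvec n p‖) * a2 * ‖mulVecE P (vecb (n+1))‖)) :
    ∀ ω R : ℝ, 0 < ω → 0 < R → a2 * R ≤ ρ →
    ∀ K : ℝ,
      (1 + ‖cvec n p‖) * L1 * a2 * R / (ip (cvec n p) (vecb (n+1))) ^ 2 < K →
      K < q * a1 * R / (‖mulVecE P (vecb (n+1))‖ * |ip (cvec n p) (vecb (n+1))|) →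
    ∀ M : ℝ,
      M = K * |ip (cvec n p) (vecb (n+1))| * ω * ‖mulVecE P (vecb (n+1))‖
          / ((1 + ‖cvec n p‖) * L1) →
    ∃ δ : ℝ, 0 < δ ∧
      -- (3.3)
      (∀ d ∈ D, ∀ x : EuclideanSpace ℝ (Fin (n+1)), ∀ u : ℝ,
        qf P x = R ^ 2 → |u - ip p x| ≤ K * |ip (cvec n p) (vecb (n+1))| →
        ip x (mulVecE P (mulVecE (matA (n+1)) x + f d x + u • vecb (n+1))) < 0) ∧
      -- (3.4)
      (∀ d ∈ D, ∀ x : EuclideanSpace ℝ (Fin (n+1)), ∀ u : ℝ,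
        qf P x ≤ R ^ 2 → |u - ip p x| ≤ K * |ip (cvec n p) (vecb (n+1))| →
        |g d x + ip (cvec n p) (f d x)| < K * (ip (cvec n p) (vecb (n+1))) ^ 2) ∧
      -- (3.5)
      (∀ d ∈ D, ∀ x : EuclideanSpace ℝ (Fin (n+1)), ∀ z : ℝ,
        qf P x ≤ R ^ 2 → ω * |z| ≤ 1 →
        z * (M * g d x + M * ip (cvec n p) (f d x)
              - K * ip (cvec n p) (vecb (n+1)) * ω * ip (vecb (n+1)) (mulVecE P x))
          ≤ (M * K * (ip (cvec n p) (vecb (n+1))) ^ 2 * ω - δ) * z ^ 2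
            - ip x (mulVecE P
                (mulVecE (matA (n+1) + vecMulVec (vecbf (n+1)) (ef p) + δ • 1) x + f d x))) := by
  intro ω R hω hR hρR K hKlow hKup M hM
  set cb := ip (cvec n p) (vecb (n+1)) with hcbdef
  set nPb := ‖mulVecE P (vecb (n+1))‖ with hnPbdef
  set nc := ‖cvec n p‖ with hncdef
  have ha2 : 0 < a2 := lt_of_lt_of_le ha1 ha12
  have hnPbpos : 0 < nPb := ex42_nPb_pos P hP
  have hncnn : (0:ℝ) ≤ nc := norm_nonneg _
  clear_value cb nPb nc
  have hnc1 : (0:ℝ) < 1 + nc := by linarith only [hncnn]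
  have habs : 0 < |cb| := by
    rcases eq_or_ne cb 0 with h | h
    · rw [h] at hsmall
      simp only [abs_zero, mul_zero, zero_div] at hsmall
      linarith only [hsmall, hL1]
    · exact abs_pos.mpr h
  have hcbne : cb ≠ 0 := abs_pos.mp habs
  have hcb2 : 0 < cb^2 := sq_abs cb ▸ pow_pos habs 2
  have hsmall2 : (1+nc)*L1*nPb < q* |cb| := by
    have h1 : L1 * ((1+nc)*a2*nPb) < q*a1* |cb| :=
      (lt_div_iff₀ (mul_pos (mul_pos hnc1 ha2) hnPbpos)).mp hsmall
    nlinarith only [h1, mul_le_mul_of_nonneg_right ha12 (mul_nonneg hq.le (abs_nonneg cb)), ha2]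
  have hK0 : 0 < K :=
    lt_trans (div_pos (mul_pos (mul_pos (mul_pos hnc1 hL1) ha2) hR) hcb2) hKlow
  have hM0 : 0 < M := by
    rw [hM]
    exact div_pos (mul_pos (mul_pos (mul_pos hK0 habs) hω) hnPbpos) (mul_pos hnc1 hL1)
  set s := K* |cb| *ω*nPb with hsdef
  set A0 := M*K*cb^2*ω with hA0def
  clear_value s A0
  have hs0 : 0 < s := by
    rw [hsdef]; exact mul_pos (mul_pos (mul_pos hK0 habs) hω) hnPbpos
  have hA0 : 0 < A0 := by
    rw [hA0def]; exact mul_pos (mul_pos (mul_pos hM0 hK0) hcb2) hω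
  have hL1nc : 0 < (1+nc)*L1 := mul_pos hnc1 hL1
  have hMs : M*((1+nc)*L1) = s := by
    rw [hM, div_mul_cancel₀ _ hL1nc.ne']
  have hkeyE : s^2 < A0*q := by
    have hpos4 : 0 < K^2*cb^2*ω^2*nPb :=
      mul_pos (mul_pos (mul_pos (pow_pos hK0 2) hcb2) (pow_pos hω 2)) hnPbpos
    have h2 : ((1+nc)*L1*nPb) * (K^2*cb^2*ω^2*nPb) < (q* |cb|)*(K^2*cb^2*ω^2*nPb) :=
      mul_lt_mul_of_pos_right hsmall2 hpos4
    have h3 : A0*((1+nc)*L1) = K^2*(|cb| *cb^2)*ω^2*nPb := by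
      calc A0*((1+nc)*L1) = (M*((1+nc)*L1))*K*cb^2*ω := by rw [hA0def]; ring
        _ = (K* |cb| *ω*nPb)*K*cb^2*ω := by rw [hMs, hsdef]
        _ = K^2*(|cb| *cb^2)*ω^2*nPb := by ring
    have h5 : s^2*((1+nc)*L1) < (A0*q)*((1+nc)*L1) := by
      calc s^2*((1+nc)*L1) = ((1+nc)*L1*nPb) * (K^2*cb^2*ω^2*nPb) := by
            rw [hsdef, ← sq_abs cb]; ring
        _ < (q* |cb|)*(K^2*cb^2*ω^2*nPb) := h2
        _ = (A0*((1+nc)*L1))*q := by rw [h3]; ring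
        _ = (A0*q)*((1+nc)*L1) := by ring
    exact lt_of_mul_lt_mul_right h5 hL1nc.le
  obtain ⟨δ, hδ0, hδA0, hδq, hδkey⟩ := ex42_choose_delta A0 s q a1 hA0 hq ha1 hs0.le hkeyE
  -- bounds from the quadratic form
  have hxle : ∀ x : EuclideanSpace ℝ (Fin (n+1)), qf P x ≤ R^2 → ‖x‖ ≤ a2*R := by
    intro x hx
    exact ex42_le_of_sq a2 R ‖x‖ (qf P x) ha2.le hR.le (norm_nonneg x) (hnorm x).2 hx
  -- Lyapunov inequality expanded
  have hLy' : ∀ d ∈ D, ∀ x : EuclideanSpace ℝ (Fin (n+1)),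
      ip x (mulVecE P (mulVecE (matA (n+1)) x)) + ip p x * ip x (mulVecE P (vecb (n+1)))
        + ip x (mulVecE P (f d x)) ≤ -q*‖x‖^2 := by
    intro d hd x
    have h := hLyap d hd x
    rw [ex42_abp, ex42_mulVecE_add, ex42_mulVecE_smul, ex42_ip_add_right,
      ex42_ip_smul_right] at h
    exact h
  refine ⟨δ, hδ0, ?_, ?_, ?_⟩
  · -- (3.3)
    intro d hd x u hqfx hub
    have hx1 : a1*R ≤ ‖x‖ := by
      have h1 := (hnorm x).1
      rw [hqfx] at h1
      exact ex42_ge_of_sq a1 R ‖x‖ ha1.le hR.le (norm_nonneg x) h1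
    have hxpos : 0 < ‖x‖ := lt_of_lt_of_le (mul_pos ha1 hR) hx1
    have hLy := hLy' d hd x
    rw [ex42_mulVecE_add, ex42_mulVecE_add, ex42_mulVecE_smul, ex42_ip_add_right,
      ex42_ip_add_right, ex42_ip_smul_right]
    have hPbabs : |ip x (mulVecE P (vecb (n+1)))| ≤ ‖x‖*nPb := by
      rw [hnPbdef]; exact ex42_abs_ip_le _ _
    have h6 : (u - ip p x) * ip x (mulVecE P (vecb (n+1))) ≤ (K* |cb|)*(‖x‖*nPb) := by
      calc (u - ip p x) * ip x (mulVecE P (vecb (n+1)))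
          ≤ |(u - ip p x) * ip x (mulVecE P (vecb (n+1)))| := le_abs_self _
        _ = |u - ip p x| * |ip x (mulVecE P (vecb (n+1)))| := abs_mul _ _
        _ ≤ (K* |cb|)*(‖x‖*nPb) :=
            mul_le_mul hub hPbabs (abs_nonneg _) (mul_nonneg hK0.le (abs_nonneg cb))
    have hKup' : K*(nPb* |cb|) < q*a1*R := (lt_div_iff₀ (mul_pos hnPbpos habs)).mp hKup
    have h7 : K* |cb| *nPb < q*‖x‖ := by
      linarith only [hKup', mul_le_mul_of_nonneg_left hx1 hq.le]
    have h8 : (K* |cb|)*(‖x‖*nPb) < q*‖x‖^2 := by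
      linarith only [mul_lt_mul_of_pos_right h7 hxpos]
    linarith only [hLy, h6, h8]
  · -- (3.4)
    intro d hd x u hqfx hub
    have hx2 : ‖x‖ ≤ a2*R := hxle x hqfx
    have hxρ : ‖x‖ ≤ ρ := le_trans hx2 hρR
    have hfg := hloc d hd x hxρ
    have hgb : |g d x| ≤ L1*‖x‖ := le_trans (le_max_right _ _) hfg
    have hfb : ‖f d x‖ ≤ L1*‖x‖ := le_trans (le_max_left _ _) hfg
    have hcf : |ip (cvec n p) (f d x)| ≤ nc*(L1*‖x‖) := by
      rw [hncdef] at hncnn ⊢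
      exact (ex42_abs_ip_le _ _).trans (mul_le_mul_of_nonneg_left hfb hncnn)
    have hKl2 : (1+nc)*L1*a2*R < K*cb^2 := (div_lt_iff₀ hcb2).mp hKlow
    calc |g d x + ip (cvec n p) (f d x)| ≤ |g d x| + |ip (cvec n p) (f d x)| := abs_add_le _ _
      _ ≤ (1+nc)*(L1*‖x‖) := by linarith only [hgb, hcf]
      _ ≤ (1+nc)*(L1*(a2*R)) :=
          mul_le_mul_of_nonneg_left (mul_le_mul_of_nonneg_left hx2 hL1.le) hnc1.le
      _ < K*cb^2 := by linarith only [hKl2]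
  · -- (3.5)
    intro d hd x z hqfx hωz
    have hx2 : ‖x‖ ≤ a2*R := hxle x hqfx
    have hxρ : ‖x‖ ≤ ρ := le_trans hx2 hρR
    have hfg := hloc d hd x hxρ
    have hgb : |g d x| ≤ L1*‖x‖ := le_trans (le_max_right _ _) hfg
    have hfb : ‖f d x‖ ≤ L1*‖x‖ := le_trans (le_max_left _ _) hfg
    have hcf : |ip (cvec n p) (f d x)| ≤ nc*(L1*‖x‖) := by
      rw [hncdef] at hncnn ⊢
      exact (ex42_abs_ip_le _ _).trans (mul_le_mul_of_nonneg_left hfb hncnn)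
    have hLy := hLy' d hd x
    have hPbabs : |ip x (mulVecE P (vecb (n+1)))| ≤ ‖x‖*nPb := by
      rw [hnPbdef]; exact ex42_abs_ip_le _ _
    -- rewrite the goal into scalar form
    rw [ex42_ip_mulVecE_symm hP.1, ex42_add_mulVecE, ex42_smul_one_mulVecE, ex42_abp,
      ex42_mulVecE_add, ex42_mulVecE_add, ex42_mulVecE_add, ex42_mulVecE_smul,
      ex42_mulVecE_smul, ex42_ip_add_right, ex42_ip_add_right, ex42_ip_add_right,
      ex42_ip_smul_right, ex42_ip_smul_right]
    have hqf_eq : ip x (mulVecE P x) = qf P x := rfl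
    rw [hqf_eq]
    -- scalar bounds
    have h1 : |g d x + ip (cvec n p) (f d x)| ≤ (1+nc)*(L1*‖x‖) := by
      calc |g d x + ip (cvec n p) (f d x)| ≤ |g d x| + |ip (cvec n p) (f d x)| := abs_add_le _ _
        _ ≤ (1+nc)*(L1*‖x‖) := by linarith only [hgb, hcf]
    have hzMg : z*(M*(g d x) + M*(ip (cvec n p) (f d x))) ≤ s*(|z| *‖x‖) := by
      calc z*(M*(g d x) + M*(ip (cvec n p) (f d x)))
          ≤ |z*(M*(g d x) + M*(ip (cvec n p) (f d x)))| := le_abs_self _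
        _ = |z| * (M * |g d x + ip (cvec n p) (f d x)|) := by
            rw [abs_mul, show M*(g d x) + M*(ip (cvec n p) (f d x))
              = M*(g d x + ip (cvec n p) (f d x)) by ring, abs_mul, abs_of_pos hM0]
        _ ≤ |z| * (M * ((1+nc)*(L1*‖x‖))) := by
            apply mul_le_mul_of_nonneg_left (mul_le_mul_of_nonneg_left h1 hM0.le) (abs_nonneg z)
        _ = s*(|z| *‖x‖) := by rw [← hMs]; ring
    have hzPb : -(z*(K*cb*ω*ip x (mulVecE P (vecb (n+1))))) ≤ s*(|z| *‖x‖) := by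
      calc -(z*(K*cb*ω*ip x (mulVecE P (vecb (n+1)))))
          ≤ |z*(K*cb*ω*ip x (mulVecE P (vecb (n+1))))| := neg_le_abs _
        _ = |z| * (K* |cb| *ω* |ip x (mulVecE P (vecb (n+1)))|) := by
            rw [abs_mul, abs_mul, abs_mul, abs_mul, abs_of_pos hK0, abs_of_pos hω]
        _ ≤ |z| * (K* |cb| *ω*(‖x‖*nPb)) := by
            apply mul_le_mul_of_nonneg_left _ (abs_nonneg z)
            apply mul_le_mul_of_nonneg_left hPbabs
              (mul_nonneg (mul_nonneg hK0.le (abs_nonneg cb)) hω.le)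
        _ = s*(|z| *‖x‖) := by rw [hsdef]; ring
    have h35 : 2*s* |z| *‖x‖ ≤ (A0-δ)* |z|^2 + q*‖x‖^2 - δ*(qf P x) :=
      ex42_quad35 s (A0-δ) δ q a1 (|z|) ‖x‖ (qf P x) (by linarith) ha1 hδ0.le
        (abs_nonneg z) (norm_nonneg x) hs0.le (hnorm x).1 hδkey
    have hsq2 : (A0-δ)* |z|^2 = (A0-δ)*z^2 := by rw [sq_abs]
    linarith only [hzMg, hzPb, h35, hLy, hsq2]
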